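/- arXiv:2504.19481 — 2 statements merged into one kernel-verified Lean document; each statement's English description precedes it below -/
import Mathlib

section
/- Under the hypotheses of the previous item, together with: (i) the trace bound ‖(u₂)_T‖²_Γ ≤ C_tr² ‖u₂‖ ‖curl u₂‖ for u₂ ∈ X, (ii) the spectral lower bound ‖curl u₂‖² = Σ_j λ_j|μ_j|², ‖u₂‖² = Σ_j|μ_j|², C_T κ²(T u₂,u₂) = C_T κ² Σ_{j≤N}|μ_j|² with 0 < λ_1 ≤ ... ≤ λ_N ≤ C_T κ² < λ_{N+1} and C_T = 6 + 49 C_tr⁴ λ², one has (Re+Im) b(u₁+u₂, u₂−u₁) ≥ (1/2)(|||u₁|||² + |||u₂|||²) where |||w|||² = ‖curl w‖² + κ²‖w‖² + κλ‖w_T‖²_Γ. -/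
open scoped BigOperators

set_option maxHeartbeats 2000000 in
/-- Coercivity lower bound in the inf-sup proof (Lemma 3.2):
under the trace bound and the spectral representation of `u₂`,
`(Re+Im) b(u₁+u₂, u₂−u₁) ≥ (1/2)(|||u₁|||² + |||u₂|||²)`. -/
theorem stmt6 {V : Type*} [NormedAddCommGroup V] [InnerProductSpace ℂ V]
    (cF TF tF : V →ₛₗ[starRingEnd ℂ] V →ₗ[ℂ] ℂ)
    (P : V →ₗ[ℂ] V) (κ lam CT Ctr : ℝ) (hκ : 0 < κ) (hlam : 0 < lam)
    (hCtr : 0 ≤ Ctr) (hCTdef : CT = 6 + 49 * Ctr ^ 4 * lam ^ 2)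
    (u₁ u₂ : V)
    (hc1 : ∀ w, cF u₁ w = 0) (hc1' : ∀ w, cF w u₁ = 0)
    (horth : (inner ℂ u₁ u₂ : ℂ) = 0) (horth' : (inner ℂ u₂ u₁ : ℂ) = 0)
    (hP1 : P u₁ = 0) (hP2 : P u₂ = u₂)
    (hcF2 : (cF u₂ u₂).im = 0) (hTF2 : (TF u₂ u₂).im = 0)
    (htd1 : (tF u₁ u₁).im = 0) (htd2 : (tF u₂ u₂).im = 0)
    (htd1' : 0 ≤ (tF u₁ u₁).re) (htd2' : 0 ≤ (tF u₂ u₂).re)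
    (therm : tF u₂ u₁ = starRingEnd ℂ (tF u₁ u₂))
    (μ : ℕ → ℂ) (lamj : ℕ → ℝ)
    (hlpos : ∀ j, 0 < lamj j) (hlmono : Monotone lamj) (N : ℕ)
    (hN : lamj N ≤ CT * κ ^ 2) (hN' : CT * κ ^ 2 < lamj (N + 1))
    (hsum1 : Summable fun j => ‖μ j‖ ^ 2)
    (hsum2 : Summable fun j => lamj j * ‖μ j‖ ^ 2)
    (hArep : (cF u₂ u₂).re = ∑' j, lamj j * ‖μ j‖ ^ 2)
    (hBrep : ‖u₂‖ ^ 2 = ∑' j, ‖μ j‖ ^ 2)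
    (hSrep : (TF u₂ u₂).re = ∑ j ∈ Finset.range (N + 1), ‖μ j‖ ^ 2)
    (htr : (tF u₂ u₂).re ≤ Ctr ^ 2 * ‖u₂‖ * Real.sqrt ((cF u₂ u₂).re))
    (hCS : ‖tF u₁ u₂‖ ≤ Real.sqrt ((tF u₁ u₁).re) * Real.sqrt ((tF u₂ u₂).re))
    (b : V → V → ℂ)
    (hb : ∀ x y, b x y = cF x y - (κ : ℂ) ^ 2 * (inner ℂ x y : ℂ)
        + (CT : ℂ) * (κ : ℂ) ^ 2 * TF (P x) (P y)
        - Complex.I * (κ : ℂ) * (lam : ℂ) * tF x y) :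
    (b (u₁ + u₂) (u₂ - u₁)).re + (b (u₁ + u₂) (u₂ - u₁)).im ≥
      (1 / 2) * ((κ ^ 2 * ‖u₁‖ ^ 2 + κ * lam * (tF u₁ u₁).re)
        + ((cF u₂ u₂).re + κ ^ 2 * ‖u₂‖ ^ 2 + κ * lam * (tF u₂ u₂).re)) := by
  have hinner : ∀ v : V, (inner ℂ v v : ℂ) = (‖v‖:ℂ)^2 := fun v => by
    rw [inner_self_eq_norm_sq_to_K]; rfl
  set A := (cF u₂ u₂).re with hA
  set S := (TF u₂ u₂).re with hS
  set t11 := (tF u₁ u₁).re with ht11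
  set t22 := (tF u₂ u₂).re with ht22
  set m := (tF u₁ u₂).im with hm
  have hCT : (0:ℝ) < CT := by rw [hCTdef]; positivity
  have hκ2 : (0:ℝ) < κ^2 := by positivity
  -- value of b
  have hbval : b (u₁ + u₂) (u₂ - u₁)
      = cF u₂ u₂ - (κ:ℂ)^2 * ((‖u₂‖:ℂ)^2 - (‖u₁‖:ℂ)^2)
        + (CT:ℂ) * (κ:ℂ)^2 * TF u₂ u₂
        - Complex.I * (κ:ℂ) * (lam:ℂ)
            * (tF u₁ u₂ + tF u₂ u₂ - tF u₁ u₁ - starRingEnd ℂ (tF u₁ u₂)) := by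
    rw [hb]
    simp only [map_add, map_sub, LinearMap.add_apply, LinearMap.sub_apply,
      hc1, hc1', hP1, hP2, map_zero, LinearMap.zero_apply,
      inner_add_left, inner_sub_right, horth, horth', therm, hinner]
    ring
  have hre : (b (u₁ + u₂) (u₂ - u₁)).re
      = A - κ^2 * (‖u₂‖^2 - ‖u₁‖^2) + CT * κ^2 * S + κ * lam * (2*m) := by
    rw [hbval]
    simp only [← Complex.ofReal_pow, Complex.add_re, Complex.sub_re, Complex.mul_re,
      Complex.mul_im, Complex.add_im, Complex.sub_im, Complex.I_re, Complex.I_im,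
      Complex.ofReal_re, Complex.ofReal_im, Complex.conj_re, Complex.conj_im,
      hcF2, hTF2, htd1, htd2]
    simp only [← hA, ← hS, ← ht11, ← ht22, ← hm]
    ring
  have him : (b (u₁ + u₂) (u₂ - u₁)).im = κ * lam * (t11 - t22) := by
    rw [hbval]
    simp only [← Complex.ofReal_pow, Complex.add_re, Complex.sub_re, Complex.mul_re,
      Complex.mul_im, Complex.add_im, Complex.sub_im, Complex.I_re, Complex.I_im,
      Complex.ofReal_re, Complex.ofReal_im, Complex.conj_re, Complex.conj_im,
      hcF2, hTF2, htd1, htd2]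
    simp only [← hA, ← hS, ← ht11, ← ht22, ← hm]
    ring
  -- nonnegativity facts
  have hA0 : 0 ≤ A := by
    rw [hArep]
    exact tsum_nonneg fun j => mul_nonneg (hlpos j).le (sq_nonneg _)
  have hS0 : 0 ≤ S := by
    rw [hSrep]
    exact Finset.sum_nonneg fun j _ => sq_nonneg _
  -- spectral inequality : A/4 + CT κ² S ≥ (CT/4) κ² ‖u₂‖²
  have hshift1 : Summable (fun j => ‖μ (j + (N+1))‖ ^ 2) :=
    (summable_nat_add_iff (N+1)).2 hsum1
  have hshift2 : Summable (fun j => lamj (j + (N+1)) * ‖μ (j + (N+1))‖ ^ 2) :=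
    (summable_nat_add_iff (N+1)).2 hsum2
  have hBsplit : ‖u₂‖^2 = S + ∑' j, ‖μ (j + (N+1))‖ ^ 2 := by
    rw [hBrep, hSrep, ← Summable.sum_add_tsum_nat_add (N+1) hsum1]
  have hAsplit : A = (∑ j ∈ Finset.range (N+1), lamj j * ‖μ j‖ ^ 2)
      + ∑' j, lamj (j + (N+1)) * ‖μ (j + (N+1))‖ ^ 2 := by
    rw [hArep, ← Summable.sum_add_tsum_nat_add (N+1) hsum2]
  have htail : CT * κ^2 * (∑' j, ‖μ (j + (N+1))‖ ^ 2)
      ≤ ∑' j, lamj (j + (N+1)) * ‖μ (j + (N+1))‖ ^ 2 := by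
    rw [← tsum_mul_left]
    refine Summable.tsum_le_tsum (fun j => ?_) (hshift1.mul_left _) hshift2
    have h1 : CT * κ^2 ≤ lamj (j + (N+1)) :=
      le_trans hN'.le (hlmono (Nat.le_add_left (N+1) j))
    exact mul_le_mul_of_nonneg_right h1 (sq_nonneg _)
  have hhead : 0 ≤ ∑ j ∈ Finset.range (N+1), lamj j * ‖μ j‖ ^ 2 :=
    Finset.sum_nonneg fun j _ => mul_nonneg (hlpos j).le (sq_nonneg _)
  have htail0 : 0 ≤ ∑' j, ‖μ (j + (N+1))‖ ^ 2 := tsum_nonneg fun j => sq_nonneg _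
  have h3 : (CT/4) * κ^2 * ‖u₂‖^2 ≤ (1/4) * A + CT * κ^2 * S := by
    rw [hBsplit]
    linarith only [hAsplit, htail, hhead,
      mul_nonneg (mul_nonneg hCT.le hκ2.le) hS0]
  -- bound on the mixed trace term
  have hkl : 0 < κ * lam := mul_pos hκ hlam
  have hmlb : -((1/4) * t11 + t22) ≤ m := by
    have ha : |m| ≤ ‖tF u₁ u₂‖ := by
      exact Complex.abs_im_le_norm _
    have hb' : Real.sqrt t11 * Real.sqrt t22 ≤ (1/4) * t11 + t22 := by
      linarith only [sq_nonneg (Real.sqrt t11 - 2 * Real.sqrt t22),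
        Real.sq_sqrt htd1', Real.sq_sqrt htd2']
    have := abs_le.1 (ha.trans (hCS.trans hb'))
    linarith only [this.1]
  have h1 : -((1/2) * (κ*lam) * t11 + 2 * (κ*lam) * t22) ≤ 2 * (κ*lam) * m := by
    linarith only [mul_le_mul_of_nonneg_left hmlb hkl.le]
  -- AM-GM on the trace bound
  have h2 : (7/2) * (κ*lam) * t22 ≤ (1/4) * A + (49/4) * (κ*lam)^2 * Ctr^4 * ‖u₂‖^2 := by
    have hsq : Real.sqrt A ^ 2 = A := Real.sq_sqrt hA0
    have hs0 : 0 ≤ Real.sqrt A := Real.sqrt_nonneg A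
    linarith only [sq_nonneg (Real.sqrt A - 7 * (κ*lam) * Ctr^2 * ‖u₂‖), hsq,
      mul_le_mul_of_nonneg_left htr hkl.le]
  -- combine everything
  rw [hre, him]
  have hn1 : (0:ℝ) ≤ κ^2 * ‖u₁‖^2 := by positivity
  rw [hCTdef] at h3 ⊢
  linarith only [h1, h2, h3, hn1]
end

section
/- Let b be a sesquilinear form on V, V_h ⊆ V a subspace, and P_h⁻ : V → V_h the adjoint elliptic projection defined by b(v_h, u − P_h⁻u) = 0 for all v_h ∈ V_h. Suppose for each v in a dual-data space there is w(v) ∈ V with b(w(v), φ) = (P⊥v, φ) for all φ ∈ V, satisfying the regularity bound ‖w(v)‖_{p+1} ≤ C‖v‖_{p-1,κ}. Suppose further the approximation property inf_{χ_h∈V_h} |||w(v) − χ_h||| ≤ C h^p ‖w(v)‖_{p+1}, continuity |b(x,y)| ≤ C|||x||| |||y|||, and the quasi-optimality |||u − P_h⁻u||| ≤ C inf_{v_h} |||u − v_h|||. Then the negative-norm estimate holds: sup_{v≠0} |(P⊥(u − P_h⁻u), v)| / ‖v‖_{p-1,κ} ≤ C h^p inf_{v_h∈V_h} |||u − v_h|||.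 -/
/-- Abstract negative-norm error estimate for the adjoint elliptic projection
(Lemma 3.5): duality + adjoint Galerkin orthogonality + continuity +
approximation + regularity give `|(P⊥(u − P_h⁻u), v)| ≤ C h^p (inf-error) ‖v‖_{p-1,κ}`. -/
theorem stmt15 {V D : Type*} [AddCommGroup V] [Module ℂ V]
    (Vh : Submodule ℂ V) (Enorm nreg : V → ℝ) (nd : D → ℝ)
    (hE : ∀ x, 0 ≤ Enorm x) (hnd : ∀ v, 0 ≤ nd v) (hnreg : ∀ x, 0 ≤ nreg x)
    (b : V → V → ℂ) (pair : D → V → ℂ)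
    (hbsub : ∀ x y z, b (x - y) z = b x z - b y z)
    (Cc Ca Creg Cq hstep : ℝ) (p : ℕ)
    (hCc : 0 ≤ Cc) (hCa : 0 ≤ Ca) (hCreg : 0 ≤ Creg) (hCq : 0 ≤ Cq)
    (hh : 0 < hstep)
    (hcont : ∀ x y, ‖b x y‖ ≤ Cc * Enorm x * Enorm y)
    (w : D → V)
    (hw : ∀ v φ, b (w v) φ = pair v φ)
    (hreg : ∀ v, nreg (w v) ≤ Creg * nd v)
    (happrox : ∀ v, ∃ χ ∈ Vh, Enorm (w v - χ) ≤ Ca * hstep ^ p * nreg (w v))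
    (u uP : V) (Ebest : ℝ) (hEbest : 0 ≤ Ebest)
    (hGal : ∀ vh ∈ Vh, b vh (u - uP) = 0)
    (hquasi : Enorm (u - uP) ≤ Cq * Ebest) :
    ∀ v : D, ‖pair v (u - uP)‖ ≤
      (Cc * Ca * Creg * Cq) * hstep ^ p * nd v * Ebest := by
  intro v
  obtain ⟨χ, hχ, hap⟩ := happrox v
  have key : pair v (u - uP) = b (w v - χ) (u - uP) := by
    rw [hbsub, hGal χ hχ, hw v (u - uP), sub_zero]
  rw [key]
  calc ‖b (w v - χ) (u - uP)‖ ≤ Cc * Enorm (w v - χ) * Enorm (u - uP) := hcont _ _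
    _ ≤ Cc * (Ca * hstep ^ p * (Creg * nd v)) * (Cq * Ebest) := by
        have h1 : nreg (w v) ≤ Creg * nd v := hreg v
        have h2 : Enorm (w v - χ) ≤ Ca * hstep ^ p * (Creg * nd v) :=
          hap.trans (mul_le_mul_of_nonneg_left h1 (mul_nonneg hCa (pow_pos hh p).le))
        have hpp : (0:ℝ) ≤ Ca * hstep ^ p * (Creg * nd v) := mul_nonneg (mul_nonneg hCa (pow_pos hh p).le) (mul_nonneg hCreg (hnd v))
        exact mul_le_mul (mul_le_mul le_rfl h2 (hE _) hCc) hquasi (hE _) (mul_nonneg hCc hpp)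
    _ = (Cc * Ca * Creg * Cq) * hstep ^ p * nd v * Ebest := by ring
end
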